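/- Let u : ℝ → ℝ be five times continuously differentiable in a neighborhood of a point x, and for h > 0 set ε = h², d⁽¹⁾ = 1/2, d⁽²⁾ = 1/4, d⁽³⁾ = 1/4, û⁽¹⁾(h) = (1/2)u(x) + (1/2)u(x+h), û⁽²⁾(h) = −(1/2)u(x−h) + (3/2)u(x), û⁽³⁾(h) = (1/3)u(x−2h) − (7/6)u(x−h) + (11/6)u(x), β₁(h) = (u(x+h) − u(x))², β₂(h) = (u(x) − u(x−h))², β₃(h) = (13/12)(u(x) − 2u(x−h) + u(x−2h))² + (1/4)(5u(x) − 8u(x−h) + 3u(x−2h))², τ(h) = (u(x+h) − 3u(x) + 3u(x−h) − u(x−2h))², α⁽ʲ⁾(h) = d⁽ʲ⁾(1 + τ(h)/(ε + β_j(h))) and w⁽ʲ⁾(h) = α⁽ʲ⁾(h)/(α⁽¹⁾(h) + α⁽²⁾(h) + α⁽³⁾(h)) for j = 1,2,3. Then as h → 0⁺: w⁽ʲ⁾(h) − d⁽ʲ⁾ = O(h⁴) for j = 1,2,3, and consequently Σ_{j=1}³ (w⁽ʲ⁾(h) − d⁽ʲ⁾) û⁽ʲ⁾(h) = O(h⁴).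 -/

import Mathlib

open Asymptotics Topology

section WenoAux

open Metric Set Filter Finset

private lemma weno_weight_bound (d β : Fin 3 → ℝ) (τ ε : ℝ)
    (hd0 : ∀ k, 0 ≤ d k) (hd1 : ∀ k, d k ≤ 1) (hds : ∑ k, d k = 1)
    (hβ : ∀ k, 0 ≤ β k) (hτ : 0 ≤ τ) (hε : 0 < ε) (j : Fin 3) :
    |(d j * (1 + τ / (ε + β j))) / (∑ k, d k * (1 + τ / (ε + β k))) - d j| ≤ τ / ε := by
  set α : Fin 3 → ℝ := fun k => d k * (1 + τ / (ε + β k)) with hα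
  set q : Fin 3 → ℝ := fun k => d k * (τ / (ε + β k)) with hq
  have hden : ∀ k, 0 < ε + β k := fun k => by have := hβ k; linarith
  have hq0 : ∀ k, 0 ≤ q k := fun k =>
    mul_nonneg (hd0 k) (div_nonneg hτ (hden k).le)
  have hqle : ∀ k, q k ≤ d k * (τ / ε) := fun k => by
    apply mul_le_mul_of_nonneg_left _ (hd0 k)
    exact div_le_div_of_nonneg_left hτ hε (by have := hβ k; linarith) |>.trans_eq rfl
  have hαq : ∀ k, α k = d k + q k := fun k => by simp [hα, hq]; ring
  have hS : (∑ k, α k) = 1 + ∑ k, q k := by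
    simp only [hαq, Finset.sum_add_distrib, hds]
  have hQ0 : 0 ≤ ∑ k, q k := Finset.sum_nonneg fun k _ => hq0 k
  have hQle : (∑ k, q k) ≤ τ / ε := by
    calc (∑ k, q k) ≤ ∑ k, d k * (τ / ε) := Finset.sum_le_sum fun k _ => hqle k
    _ = τ / ε := by rw [← Finset.sum_mul, hds, one_mul]
  have hS1 : 1 ≤ ∑ k, α k := by rw [hS]; linarith
  have hSpos : 0 < ∑ k, α k := by linarith
  have key : α j / (∑ k, α k) - d j = (q j - d j * ∑ k, q k) / (∑ k, α k) := by
    field_simp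
    rw [hαq j, hS]; ring
  rw [key, abs_div, abs_of_pos hSpos]
  have hnum : |q j - d j * ∑ k, q k| ≤ τ / ε := by
    rw [abs_sub_le_iff]
    have h1 : q j ≤ τ / ε := (hqle j).trans (by nlinarith [div_nonneg hτ hε.le, hd1 j])
    have h2 : d j * ∑ k, q k ≤ τ / ε := by nlinarith [hd1 j, hd0 j]
    have h3 : 0 ≤ d j * ∑ k, q k := mul_nonneg (hd0 j) hQ0
    constructor <;> nlinarith [hq0 j]
  calc |q j - d j * ∑ k, q k| / (∑ k, α k) ≤ |q j - d j * ∑ k, q k| / 1 := by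
        apply div_le_div_of_nonneg_left (abs_nonneg _) one_pos hS1
  _ = |q j - d j * ∑ k, q k| := div_one _
  _ ≤ τ / ε := hnum

private lemma weno_comb_hasDerivAt {g g' : ℝ → ℝ} {x δ : ℝ}
    (hg : ∀ y ∈ ball x δ, HasDerivAt g (g' y) y)
    (a b c : ℝ) {t : ℝ} (h1 : x + t ∈ ball x δ) (h2 : x - t ∈ ball x δ)
    (h3 : x - 2*t ∈ ball x δ) :
    HasDerivAt (fun s => a * g (x+s) + b * g (x-s) + c * g (x-2*s))
      (a * g' (x+t) - b * g' (x-t) - 2 * c * g' (x-2*t)) t := by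
  have e1 : HasDerivAt (fun s : ℝ => x + s) 1 t := (hasDerivAt_id t).const_add x
  have e2 : HasDerivAt (fun s : ℝ => x - s) (-1) t := by
    simpa using (hasDerivAt_id t).const_sub x
  have e3 : HasDerivAt (fun s : ℝ => x - 2*s) (-2) t := by
    simpa using ((hasDerivAt_id t).const_mul 2).const_sub x
  have d1 := (hg _ h1).comp t e1
  have d2 := (hg _ h2).comp t e2
  have d3 := (hg _ h3).comp t e3
  have := ((d1.const_mul a).add (d2.const_mul b)).add (d3.const_mul c)
  refine this.congr_deriv ?_
  ring

private lemma weno_mvt_bound {f f' : ℝ → ℝ} {h K : ℝ}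
    (hf : ∀ τ ∈ Icc (0:ℝ) h, HasDerivAt f (f' τ) τ)
    (hK : ∀ τ ∈ Icc (0:ℝ) h, |f' τ| ≤ K) :
    ∀ τ ∈ Icc (0:ℝ) h, |f τ - f 0| ≤ K * τ := by
  intro τ hτ
  have h0 : (0:ℝ) ∈ Icc (0:ℝ) h := ⟨le_refl _, hτ.1.trans hτ.2⟩
  have := Convex.norm_image_sub_le_of_norm_hasDerivWithin_le
    (f' := f') (fun y hy => (hf y hy).hasDerivWithinAt)
    (fun y hy => by simpa [Real.norm_eq_abs] using hK y hy)
    (convex_Icc 0 h) h0 hτ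
  simpa [Real.norm_eq_abs, abs_of_nonneg hτ.1] using this

private lemma weno_third_diff_bound {u : ℝ → ℝ} {x : ℝ} (hu : ContDiffAt ℝ 5 u x) :
    ∃ C r : ℝ, 0 < r ∧ ∀ h : ℝ, 0 < h → h < r →
      |u (x+h) - 3*u x + 3*u (x-h) - u (x-2*h)| ≤ C * h^3 := by
  obtain ⟨s, hsnhds, hs⟩ := hu.contDiffOn (m := 3) (by norm_num) (by simp)
  obtain ⟨δ₀, hδ₀, hball⟩ := Metric.mem_nhds_iff.1 (interior_mem_nhds.2 hsnhds)
  have hso : IsOpen (interior s) := isOpen_interior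
  have hs' : ContDiffOn ℝ 3 u (interior s) := hs.mono interior_subset
  set t := interior s
  have hxt : x ∈ t := hball (mem_ball_self hδ₀)
  set u1 := deriv u with hu1
  set u2 := deriv u1 with hu2
  set u3 := deriv u2 with hu3
  have c1 : ContDiffOn ℝ 2 u1 t := hs'.deriv_of_isOpen hso (by norm_num)
  have c2 : ContDiffOn ℝ 1 u2 t := c1.deriv_of_isOpen hso (by norm_num)
  have c3 : ContinuousOn u3 t :=
    (c2.deriv_of_isOpen (m := 0) hso (by norm_num)).continuousOn
  have D0 : ∀ y ∈ t, HasDerivAt u (u1 y) y := fun y hy =>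
    ((hs'.differentiableOn (by norm_num) y hy).differentiableAt
      (hso.mem_nhds hy)).hasDerivAt
  have D1 : ∀ y ∈ t, HasDerivAt u1 (u2 y) y := fun y hy =>
    ((c1.differentiableOn (by norm_num) y hy).differentiableAt
      (hso.mem_nhds hy)).hasDerivAt
  have D2 : ∀ y ∈ t, HasDerivAt u2 (u3 y) y := fun y hy =>
    ((c2.differentiableOn (by norm_num) y hy).differentiableAt
      (hso.mem_nhds hy)).hasDerivAt
  have hc3x : ContinuousAt u3 x := c3.continuousAt (hso.mem_nhds hxt)
  obtain ⟨δ₁, hδ₁, hMc⟩ := Metric.continuousAt_iff.1 hc3x 1 one_pos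
  set M := |u3 x| + 1 with hMdef
  have hM0 : 0 < M := by positivity
  set δ := min δ₀ δ₁ with hδdef
  have hδ : 0 < δ := lt_min hδ₀ hδ₁
  have hMb : ∀ y ∈ ball x δ, |u3 y| ≤ M := by
    intro y hy
    have h1 := hMc (show dist y x < δ₁ from
      lt_of_lt_of_le (mem_ball.1 hy) (min_le_right _ _))
    rw [Real.dist_eq] at h1
    calc |u3 y| ≤ |u3 y - u3 x| + |u3 x| := by
          simpa using abs_add_le (u3 y - u3 x) (u3 x)
    _ ≤ M := by rw [hMdef]; linarith
  have hballt : ∀ y ∈ ball x δ, y ∈ t := fun y hy =>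
    hball (mem_ball.2 (lt_of_lt_of_le (mem_ball.1 hy) (min_le_left _ _)))
  have D0' : ∀ y ∈ ball x δ, HasDerivAt u (u1 y) y := fun y hy => D0 y (hballt y hy)
  have D1' : ∀ y ∈ ball x δ, HasDerivAt u1 (u2 y) y := fun y hy => D1 y (hballt y hy)
  have D2' : ∀ y ∈ ball x δ, HasDerivAt u2 (u3 y) y := fun y hy => D2 y (hballt y hy)
  set T0 : ℝ → ℝ := fun s => 1 * u (x+s) + 3 * u (x-s) + (-1) * u (x-2*s) with hT0
  set T1 : ℝ → ℝ := fun s => 1 * u1 (x+s) + (-3) * u1 (x-s) + 2 * u1 (x-2*s) with hT1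
  set T2 : ℝ → ℝ := fun s => 1 * u2 (x+s) + 3 * u2 (x-s) + (-4) * u2 (x-2*s) with hT2
  set T3 : ℝ → ℝ := fun s => 1 * u3 (x+s) + (-3) * u3 (x-s) + 8 * u3 (x-2*s) with hT3
  refine ⟨12 * M, δ / 2, by positivity, fun h hh hhr => ?_⟩
  have hmem : ∀ τ ∈ Icc (0:ℝ) h,
      x + τ ∈ ball x δ ∧ x - τ ∈ ball x δ ∧ x - 2*τ ∈ ball x δ := by
    intro τ hτ
    obtain ⟨ht0, ht1⟩ := hτ
    refine ⟨?_, ?_, ?_⟩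
    · rw [mem_ball, Real.dist_eq, show x + τ - x = τ by ring, abs_lt]
      constructor <;> linarith
    · rw [mem_ball, Real.dist_eq, show x - τ - x = -τ by ring, abs_lt]
      constructor <;> linarith
    · rw [mem_ball, Real.dist_eq, show x - 2*τ - x = -(2*τ) by ring, abs_lt]
      constructor <;> linarith
  have dT0 : ∀ τ ∈ Icc (0:ℝ) h, HasDerivAt T0 (T1 τ) τ := by
    intro τ hτ
    obtain ⟨m1, m2, m3⟩ := hmem τ hτ
    have := weno_comb_hasDerivAt D0' 1 3 (-1) m1 m2 m3
    convert this using 1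
    simp [hT1]; ring
  have dT1 : ∀ τ ∈ Icc (0:ℝ) h, HasDerivAt T1 (T2 τ) τ := by
    intro τ hτ
    obtain ⟨m1, m2, m3⟩ := hmem τ hτ
    have := weno_comb_hasDerivAt D1' 1 (-3) 2 m1 m2 m3
    convert this using 1
    simp [hT2]; ring
  have dT2 : ∀ τ ∈ Icc (0:ℝ) h, HasDerivAt T2 (T3 τ) τ := by
    intro τ hτ
    obtain ⟨m1, m2, m3⟩ := hmem τ hτ
    have := weno_comb_hasDerivAt D2' 1 3 (-4) m1 m2 m3
    convert this using 1
    simp [hT3]; ring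
  have bT3 : ∀ τ ∈ Icc (0:ℝ) h, |T3 τ| ≤ 12 * M := by
    intro τ hτ
    obtain ⟨m1, m2, m3⟩ := hmem τ hτ
    have hA := hMb _ m1
    have hB := hMb _ m2
    have hC := hMb _ m3
    have e1 : |T3 τ| ≤ |1 * u3 (x+τ) + (-3) * u3 (x-τ)| + |2 * 4 * u3 (x-2*τ)| := by
      rw [hT3]
      calc |1 * u3 (x+τ) + (-3) * u3 (x-τ) + 8 * u3 (x-2*τ)|
          ≤ |1 * u3 (x+τ) + (-3) * u3 (x-τ)| + |8 * u3 (x-2*τ)| := abs_add_le _ _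
      _ = _ := by norm_num
    have e2 : |1 * u3 (x+τ) + (-3) * u3 (x-τ)| ≤ |u3 (x+τ)| + 3 * |u3 (x-τ)| := by
      calc |1 * u3 (x+τ) + (-3) * u3 (x-τ)| ≤ |1 * u3 (x+τ)| + |(-3) * u3 (x-τ)| :=
            abs_add_le _ _
      _ = |u3 (x+τ)| + 3 * |u3 (x-τ)| := by rw [abs_mul, abs_mul]; norm_num
    have e3 : |2 * 4 * u3 (x-2*τ)| = 8 * |u3 (x-2*τ)| := by rw [abs_mul]; norm_num
    linarith
  have bT2 : ∀ τ ∈ Icc (0:ℝ) h, |T2 τ| ≤ 12 * M * h := by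
    intro τ hτ
    have := weno_mvt_bound dT2 bT3 τ hτ
    have hz : T2 0 = 0 := by rw [hT2]; norm_num; ring
    rw [hz, sub_zero] at this
    calc |T2 τ| ≤ 12 * M * τ := this
    _ ≤ 12 * M * h := by
        have hp : (0:ℝ) ≤ 12 * M := by positivity
        exact mul_le_mul_of_nonneg_left hτ.2 hp
  have bT1 : ∀ τ ∈ Icc (0:ℝ) h, |T1 τ| ≤ 12 * M * h * h := by
    intro τ hτ
    have := weno_mvt_bound dT1 bT2 τ hτ
    have hz : T1 0 = 0 := by rw [hT1]; norm_num; ring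
    rw [hz, sub_zero] at this
    calc |T1 τ| ≤ 12 * M * h * τ := this
    _ ≤ 12 * M * h * h := by
        have hp : (0:ℝ) ≤ 12 * M * h := by positivity
        exact mul_le_mul_of_nonneg_left hτ.2 hp
  have bT0 := weno_mvt_bound dT0 bT1 h ⟨hh.le, le_refl h⟩
  have hz : T0 0 = 3 * u x := by rw [hT0]; norm_num
  have key : u (x+h) - 3*u x + 3*u (x-h) - u (x-2*h) = T0 h - T0 0 := by
    rw [hz, hT0]; ring
  rw [key]
  calc |T0 h - T0 0| ≤ 12 * M * h * h * h := bT0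
  _ = 12 * M * h ^ 3 := by ring

end WenoAux

/-- The linear weights `d⁽¹⁾ = 1/2`, `d⁽²⁾ = d⁽³⁾ = 1/4` of the fourth order
upwind SBP-WENO interior flux. -/
noncomputable def wenoD : Fin 3 → ℝ := ![1/2, 1/4, 1/4]

/-- The substencil fluxes `û⁽¹⁾, û⁽²⁾, û⁽³⁾` of the fourth order upwind
SBP-WENO interior flux, at the point `x` with grid spacing `h`. -/
noncomputable def wenoUhat (u : ℝ → ℝ) (x h : ℝ) : Fin 3 → ℝ :=
  ![(1/2)*u x + (1/2)*u (x+h),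
    -(1/2)*u (x-h) + (3/2)*u x,
    (1/3)*u (x-2*h) - (7/6)*u (x-h) + (11/6)*u x]

/-- The smoothness indicators `β₁, β₂, β₃`. -/
noncomputable def wenoBeta (u : ℝ → ℝ) (x h : ℝ) : Fin 3 → ℝ :=
  ![(u (x+h) - u x)^2,
    (u x - u (x-h))^2,
    (13/12)*(u x - 2*u (x-h) + u (x-2*h))^2
      + (1/4)*(5*u x - 8*u (x-h) + 3*u (x-2*h))^2]

/-- The global smoothness indicator `τ`. -/
noncomputable def wenoTau (u : ℝ → ℝ) (x h : ℝ) : ℝ :=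
  (u (x+h) - 3*u x + 3*u (x-h) - u (x-2*h))^2

/-- The unnormalized nonlinear weights `α⁽ʲ⁾ = d⁽ʲ⁾(1 + τ/(ε + β_j))` with
regularization `ε = h²`. -/
noncomputable def wenoAlpha (u : ℝ → ℝ) (x h : ℝ) (j : Fin 3) : ℝ :=
  wenoD j * (1 + wenoTau u x h / (h^2 + wenoBeta u x h j))

/-- The normalized nonlinear WENO weights `w⁽ʲ⁾`. -/
noncomputable def wenoW (u : ℝ → ℝ) (x h : ℝ) (j : Fin 3) : ℝ :=
  wenoAlpha u x h j / (∑ k : Fin 3, wenoAlpha u x h k)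

/-- In smooth regions the nonlinear WENO weights of the fourth order upwind
SBP-WENO scheme agree with the linear weights to `O(h⁴)`, and hence the WENO
flux deviates from the linear flux by `O(h⁴)`. -/
theorem stmt_18 (u : ℝ → ℝ) (x : ℝ) (hu : ContDiffAt ℝ 5 u x) :
    (∀ j : Fin 3,
      (fun h : ℝ => wenoW u x h j - wenoD j) =O[𝓝[>] (0:ℝ)] fun h => h^4) ∧
    ((fun h : ℝ => ∑ j : Fin 3, (wenoW u x h j - wenoD j) * wenoUhat u x h j)
      =O[𝓝[>] (0:ℝ)] fun h => h^4) := by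
  
  obtain ⟨C, r, hr, hbnd⟩ := weno_third_diff_bound hu
  have hd0 : ∀ k : Fin 3, 0 ≤ wenoD k := by
    intro k; fin_cases k <;> norm_num [wenoD]
  have hd1 : ∀ k : Fin 3, wenoD k ≤ 1 := by
    intro k; fin_cases k <;> norm_num [wenoD]
  have hds : ∑ k : Fin 3, wenoD k = 1 := by
    simp [wenoD, Fin.sum_univ_three]; norm_num
  have hw : ∀ j : Fin 3, ∀ h ∈ Set.Ioo (0:ℝ) r, |wenoW u x h j - wenoD j| ≤ C^2 * h^4 := by
    intro j h hh
    obtain ⟨h0, h1⟩ := hh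
    have hβ : ∀ k : Fin 3, 0 ≤ wenoBeta u x h k := by
      intro k; fin_cases k <;> simp [wenoBeta] <;> positivity
    have hτ0 : 0 ≤ wenoTau u x h := sq_nonneg _
    have hτb : wenoTau u x h ≤ C^2 * h^6 := by
      have hb := hbnd h h0 h1
      have h2 : wenoTau u x h = |u (x+h) - 3*u x + 3*u (x-h) - u (x-2*h)|^2 := by
        rw [wenoTau, sq_abs]
      rw [h2]
      calc |u (x+h) - 3*u x + 3*u (x-h) - u (x-2*h)|^2 ≤ (C * h^3)^2 :=
            pow_le_pow_left₀ (abs_nonneg _) hb 2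
      _ = C^2 * h^6 := by ring
    have hb2 := weno_weight_bound wenoD (wenoBeta u x h) (wenoTau u x h) (h^2)
      hd0 hd1 hds hβ hτ0 (by positivity) j
    have e : wenoW u x h j =
        (wenoD j * (1 + wenoTau u x h / (h^2 + wenoBeta u x h j))) /
          (∑ k, wenoD k * (1 + wenoTau u x h / (h^2 + wenoBeta u x h k))) := by
      simp only [wenoW, wenoAlpha]
    rw [e]
    calc |(wenoD j * (1 + wenoTau u x h / (h^2 + wenoBeta u x h j))) /
          (∑ k, wenoD k * (1 + wenoTau u x h / (h^2 + wenoBeta u x h k))) - wenoD j|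
        ≤ wenoTau u x h / h^2 := hb2
    _ ≤ (C^2 * h^6) / h^2 := by
        apply div_le_div_of_nonneg_right hτb (by positivity)
    _ = C^2 * h^4 := by field_simp
  have hmem : Set.Ioo (0:ℝ) r ∈ 𝓝[>] (0:ℝ) :=
    Ioo_mem_nhdsGT_of_mem ⟨le_refl 0, hr⟩
  have part1 : ∀ j : Fin 3,
      (fun h : ℝ => wenoW u x h j - wenoD j) =O[𝓝[>] (0:ℝ)] fun h => h^4 := by
    intro j
    rw [Asymptotics.isBigO_iff]
    refine ⟨C^2, ?_⟩
    filter_upwards [hmem] with h hh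
    rw [Real.norm_eq_abs, Real.norm_eq_abs, abs_of_nonneg (by positivity : (0:ℝ) ≤ h^4)]
    exact hw j h hh
  refine ⟨part1, ?_⟩
  have hcu : ContinuousAt u x := hu.continuousAt
  have h1 : ContinuousAt (fun h : ℝ => u (x + h)) 0 :=
    ContinuousAt.comp (by rw [add_zero]; exact hcu)
      ((continuous_const.add continuous_id).continuousAt)
  have h2 : ContinuousAt (fun h : ℝ => u (x - h)) 0 :=
    ContinuousAt.comp (by rw [sub_zero]; exact hcu)
      ((continuous_const.sub continuous_id).continuousAt)
  have h3 : ContinuousAt (fun h : ℝ => u (x - 2*h)) 0 :=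
    ContinuousAt.comp (by rw [mul_zero, sub_zero]; exact hcu)
      ((continuous_const.sub (continuous_const.mul continuous_id)).continuousAt)
  have hO1 : ∀ j : Fin 3,
      (fun h : ℝ => wenoUhat u x h j) =O[𝓝[>] (0:ℝ)] (fun _ => (1:ℝ)) := by
    intro j
    have hc0 : ContinuousAt (fun h : ℝ => wenoUhat u x h 0) 0 := by
      simp only [wenoUhat, Matrix.cons_val_zero]
      exact continuousAt_const.add (continuousAt_const.mul h1)
    have hc1 : ContinuousAt (fun h : ℝ => wenoUhat u x h 1) 0 := by
      simp only [wenoUhat, Matrix.cons_val_one, Matrix.head_cons]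
      exact (continuousAt_const.mul h2).add continuousAt_const
    have hc2 : ContinuousAt (fun h : ℝ => wenoUhat u x h 2) 0 := by
      simp only [wenoUhat, Matrix.cons_val_two, Matrix.tail_cons, Matrix.head_cons]
      exact ((continuousAt_const.mul h3).sub (continuousAt_const.mul h2)).add
        continuousAt_const
    have hc : ContinuousAt (fun h : ℝ => wenoUhat u x h j) 0 := by
      fin_cases j
      · exact hc0
      · exact hc1
      · exact hc2
    exact (hc.tendsto.mono_left nhdsWithin_le_nhds).isBigO_one ℝ
  have hprod : ∀ j : Fin 3,
      (fun h : ℝ => (wenoW u x h j - wenoD j) * wenoUhat u x h j)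
        =O[𝓝[>] (0:ℝ)] fun h => h^4 := by
    intro j
    have := (part1 j).mul (hO1 j)
    simpa using this
  have final := ((hprod 0).add (hprod 1)).add (hprod 2)
  simp only [Fin.sum_univ_three]
  exact final
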